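/- Let G be a group generated by two subgroups G₁ and G₂, let f₁ ∈ Z(G₁) and f₂ ∈ Z(G₂) (centers), with f₂ ∈ G₁ and f₁ ∈ G₂. Let ρ: G → SL₂(ℂ) be a homomorphism with ρ(f₁) ∉ {I, -I} and ρ(f₂) ∉ {I, -I}. Then the image ρ(G) is abelian. -/

import Mathlib

open Matrix

/-- Any matrix commuting with a non-scalar 2×2 matrix `A` lies in the span of `1` and `A`. -/
lemma span_of_commute_aux {A B : Matrix (Fin 2) (Fin 2) ℂ}
    (hns : ¬(A 0 1 = 0 ∧ A 1 0 = 0 ∧ A 0 0 = A 1 1))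
    (hAB : A * B = B * A) : ∃ α β : ℂ, B = α • 1 + β • A := by
  have e00 := congr_fun (congr_fun hAB 0) 0
  have e01 := congr_fun (congr_fun hAB 0) 1
  have e10 := congr_fun (congr_fun hAB 1) 0
  simp only [Matrix.mul_apply, Fin.sum_univ_two] at e00 e01 e10
  by_cases hb : A 0 1 ≠ 0
  · refine ⟨B 0 0 - (B 0 1 / A 0 1) * A 0 0, B 0 1 / A 0 1, ?_⟩
    ext i j
    fin_cases i <;> fin_cases j <;>
      simp only [Matrix.add_apply, Matrix.smul_apply, Matrix.one_apply, Fin.zero_eta,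
        Fin.mk_one, smul_eq_mul, if_true, one_ne_zero, mul_one, mul_zero,
        Fin.isValue, ne_eq, zero_ne_one, if_false, add_zero, zero_add,
        if_neg (by decide : ¬((0 : Fin 2) = 1)), if_neg (by decide : ¬((1 : Fin 2) = 0)),
        if_pos rfl]
    · field_simp
      ring
    · field_simp
    · field_simp
      linear_combination e00
    · field_simp
      linear_combination e01
  · push_neg at hb
    by_cases hc : A 1 0 ≠ 0
    · refine ⟨B 0 0 - (B 1 0 / A 1 0) * A 0 0, B 1 0 / A 1 0, ?_⟩
      ext i j
      fin_cases i <;> fin_cases j <;>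
        simp only [Matrix.add_apply, Matrix.smul_apply, Matrix.one_apply, Fin.zero_eta,
          Fin.mk_one, smul_eq_mul, if_true, one_ne_zero, mul_one, mul_zero,
          Fin.isValue, ne_eq, zero_ne_one, if_false, add_zero, zero_add,
          if_neg (by decide : ¬((0 : Fin 2) = 1)), if_neg (by decide : ¬((1 : Fin 2) = 0)),
          if_pos rfl]
      · field_simp
        ring
      · field_simp
        linear_combination -e00
      · field_simp
      · field_simp
        linear_combination -e10
    · push_neg at hc
      have had : A 0 0 - A 1 1 ≠ 0 := by
        intro h; exact hns ⟨hb, hc, by linear_combination h⟩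
      have hq : B 0 1 = 0 := by
        have h : B 0 1 * (A 0 0 - A 1 1) = 0 := by
          rw [hb] at e01; linear_combination e01
        rcases mul_eq_zero.mp h with h | h
        · exact h
        · exact absurd h had
      have hr : B 1 0 = 0 := by
        have h : B 1 0 * (A 0 0 - A 1 1) = 0 := by
          rw [hc] at e10; linear_combination -e10
        rcases mul_eq_zero.mp h with h | h
        · exact h
        · exact absurd h had
      refine ⟨B 0 0 - ((B 0 0 - B 1 1) / (A 0 0 - A 1 1)) * A 0 0,
        (B 0 0 - B 1 1) / (A 0 0 - A 1 1), ?_⟩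
      ext i j
      fin_cases i <;> fin_cases j <;>
        simp only [Matrix.add_apply, Matrix.smul_apply, Matrix.one_apply, Fin.zero_eta,
          Fin.mk_one, smul_eq_mul, if_true, one_ne_zero, mul_one, mul_zero,
          Fin.isValue, ne_eq, zero_ne_one, if_false, add_zero, zero_add,
          if_neg (by decide : ¬((0 : Fin 2) = 1)), if_neg (by decide : ¬((1 : Fin 2) = 0)),
          if_pos rfl]
      · field_simp
        ring
      · rw [hq, hb]; ring
      · rw [hr, hc]; ring
      · field_simp
        ring

/-- Two matrices commuting with a non-scalar 2×2 matrix commute with each other. -/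
lemma commute_of_commute_nonscalar {A B C : Matrix (Fin 2) (Fin 2) ℂ}
    (hns : ¬(A 0 1 = 0 ∧ A 1 0 = 0 ∧ A 0 0 = A 1 1))
    (hAB : A * B = B * A) (hAC : A * C = C * A) : B * C = C * B := by
  obtain ⟨α, β, hB⟩ := span_of_commute_aux hns hAB
  obtain ⟨γ, δ, hC⟩ := span_of_commute_aux hns hAC
  subst hB hC
  simp only [add_mul, mul_add, smul_mul_assoc, mul_smul_comm, one_mul, mul_one, smul_smul]
  module

/-- An element of `SL₂(ℂ)` other than `±1` is a non-scalar matrix. -/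
lemma nonscalar_of_ne_pm_one (M : SpecialLinearGroup (Fin 2) ℂ)
    (h1 : M ≠ 1) (h2 : M ≠ -1) :
    ¬((M : Matrix (Fin 2) (Fin 2) ℂ) 0 1 = 0 ∧ (M : Matrix (Fin 2) (Fin 2) ℂ) 1 0 = 0 ∧
      (M : Matrix (Fin 2) (Fin 2) ℂ) 0 0 = (M : Matrix (Fin 2) (Fin 2) ℂ) 1 1) := by
  rintro ⟨hb, hc, had⟩
  have hdet : (M : Matrix (Fin 2) (Fin 2) ℂ).det = 1 := M.2
  rw [Matrix.det_fin_two, hb, hc, ← had] at hdet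
  have hfac : ((M : Matrix (Fin 2) (Fin 2) ℂ) 0 0 - 1) *
      ((M : Matrix (Fin 2) (Fin 2) ℂ) 0 0 + 1) = 0 := by linear_combination hdet
  rcases mul_eq_zero.mp hfac with h | h
  · apply h1
    apply Subtype.ext
    ext i j
    fin_cases i <;> fin_cases j <;>
      simp only [Matrix.one_apply, SpecialLinearGroup.coe_one] <;>
      simp_all [sub_eq_zero]
  · apply h2
    apply Subtype.ext
    ext i j
    have ha : (M : Matrix (Fin 2) (Fin 2) ℂ) 0 0 = -1 := by linear_combination h
    fin_cases i <;> fin_cases j <;>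
      simp_all [Matrix.one_apply]

/-- If a group `G` is generated by subgroups `G₁, G₂`, with `f₁` central in `G₁`,
`f₂` central in `G₂`, `f₂ ∈ G₁`, `f₁ ∈ G₂`, and `ρ : G → SL₂(ℂ)` sends neither
`f₁` nor `f₂` into `{±I}`, then the image of `ρ` is abelian. -/
theorem graph_manifold_rep_abelian
    {G : Type*} [Group G] (G₁ G₂ : Subgroup G) (hgen : G₁ ⊔ G₂ = ⊤)
    (f₁ f₂ : G)
    (hf₁G₁ : f₁ ∈ G₁) (hf₁c : ∀ g ∈ G₁, f₁ * g = g * f₁)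
    (hf₂G₂ : f₂ ∈ G₂) (hf₂c : ∀ g ∈ G₂, f₂ * g = g * f₂)
    (hf₂G₁ : f₂ ∈ G₁) (hf₁G₂ : f₁ ∈ G₂)
    (ρ : G →* SpecialLinearGroup (Fin 2) ℂ)
    (h₁ : ρ f₁ ≠ 1) (h₁' : ρ f₁ ≠ -1)
    (h₂ : ρ f₂ ≠ 1) (h₂' : ρ f₂ ≠ -1) :
    ∀ g h : G, ρ g * ρ h = ρ h * ρ g := by
  have hns₁ := nonscalar_of_ne_pm_one (ρ f₁) h₁ h₁'
  have hns₂ := nonscalar_of_ne_pm_one (ρ f₂) h₂ h₂'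
  have coe_comm : ∀ x y : SpecialLinearGroup (Fin 2) ℂ, x * y = y * x →
      (x : Matrix (Fin 2) (Fin 2) ℂ) * (y : Matrix (Fin 2) (Fin 2) ℂ)
        = (y : Matrix (Fin 2) (Fin 2) ℂ) * (x : Matrix (Fin 2) (Fin 2) ℂ) :=
    fun x y h => congrArg Subtype.val h
  have hcomm12 : (ρ f₂ : Matrix (Fin 2) (Fin 2) ℂ) * (ρ f₁ : Matrix (Fin 2) (Fin 2) ℂ)
      = (ρ f₁ : Matrix (Fin 2) (Fin 2) ℂ) * (ρ f₂ : Matrix (Fin 2) (Fin 2) ℂ) :=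
    coe_comm _ _ (by rw [← _root_.map_mul, ← _root_.map_mul, hf₂c f₁ hf₁G₂])
  -- every element of G maps into the centralizer of ρ f₁
  have key0 : ∀ g : G, ρ f₁ * ρ g = ρ g * ρ f₁ := by
    have hG1 : G₁ ≤ (Subgroup.centralizer {ρ f₁}).comap ρ := by
      intro y hy
      simp only [Subgroup.mem_comap, Subgroup.mem_centralizer_iff, Set.mem_singleton_iff]
      rintro x rfl
      rw [← _root_.map_mul, ← _root_.map_mul, hf₁c y hy]
    have hG2 : G₂ ≤ (Subgroup.centralizer {ρ f₁}).comap ρ := by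
      intro y hy
      simp only [Subgroup.mem_comap, Subgroup.mem_centralizer_iff, Set.mem_singleton_iff]
      rintro x rfl
      have hy2 : (ρ f₂ : Matrix (Fin 2) (Fin 2) ℂ) * (ρ y : Matrix (Fin 2) (Fin 2) ℂ)
          = (ρ y : Matrix (Fin 2) (Fin 2) ℂ) * (ρ f₂ : Matrix (Fin 2) (Fin 2) ℂ) :=
        coe_comm _ _ (by rw [← _root_.map_mul, ← _root_.map_mul, hf₂c y hy])
      exact Subtype.ext (commute_of_commute_nonscalar hns₂ hcomm12 hy2)
    have htop : G₁ ⊔ G₂ ≤ (Subgroup.centralizer {ρ f₁}).comap ρ := sup_le hG1 hG2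
    rw [hgen] at htop
    intro g
    have := htop (Subgroup.mem_top g)
    simp only [Subgroup.mem_comap, Subgroup.mem_centralizer_iff, Set.mem_singleton_iff] at this
    exact this (ρ f₁) rfl
  have key : ∀ g : G, (ρ f₁ : Matrix (Fin 2) (Fin 2) ℂ) * (ρ g : Matrix (Fin 2) (Fin 2) ℂ)
      = (ρ g : Matrix (Fin 2) (Fin 2) ℂ) * (ρ f₁ : Matrix (Fin 2) (Fin 2) ℂ) :=
    fun g => coe_comm _ _ (key0 g)
  intro g h
  exact Subtype.ext (commute_of_commute_nonscalar hns₁ (key g) (key h))
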